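/- Let K, L, R be positive integers, Φ ∈ ℂ^{L×K}, and Ψ ∈ ℂ^{R×K} with every row of Ψ of Euclidean norm at most 1. Suppose the rank of Φ equals k with k < K. Then there exist matrices Φ̃ ∈ ℂ^{L×(k+1)} and Ψ̃ ∈ ℂ^{R×(k+1)} such that: (i) the last column of Φ̃ is zero; (ii) every row of Ψ̃ has Euclidean norm exactly 1; (iii) for each l ∈ [L], the l-th row of Φ̃ has the same Euclidean norm as the l-th row of Φ; and (iv) Φ̃ · Ψ̃ᴴ = Φ · Ψᴴ. Consequently, for every real t and every λ⋆, λ' ∈ ℝ, e^{−iλ⋆t}·Φ̃_{:,[k]}·(Ψ̃_{:,[k]})ᴴ + e^{−iλ't}·Φ̃_{:,k}·(Ψ̃_{:,k})ᴴ = e^{−iλ⋆t}·Φ·Ψᴴ, so the measurement data generated by a Hamiltonian with a K-fold degenerate eigenvalue λ⋆ and overlap matrices Φ, Ψ is identical to that generated by a Hamiltonian with only a k-fold degenerate eigenvalue λ⋆ and an extra eigenvalue λ'. -/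

import Mathlib

open Matrix

/-- constructive core of the information-theoretic indistinguishability result.
If `rank Φ = k < K` and every row of `Ψ` has norm at most 1, there are matrices
`Φ̃ ∈ ℂ^{L×(k+1)}`, `Ψ̃ ∈ ℂ^{R×(k+1)}` whose last `Φ̃`-column vanishes, whose `Ψ̃`-rows are
unit vectors, whose `Φ̃`-rows have the same norms as the rows of `Φ`, with
`Φ̃·Ψ̃ᴴ = Φ·Ψᴴ`, and which reproduce the Hadamard-test signal of a Hamiltonian with a
`k`-fold degenerate eigenvalue `λ⋆` plus one extra eigenvalue `λ'`. -/
theorem stmt7 (K L R : ℕ) (hK : 0 < K) (hL : 0 < L) (hR : 0 < R)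
    (k : ℕ) (hk : k < K)
    (Φ : Matrix (Fin L) (Fin K) ℂ) (Ψ : Matrix (Fin R) (Fin K) ℂ)
    (hΨrows : ∀ r, ∑ m, ‖Ψ r m‖ ^ 2 ≤ 1)
    (hrank : Φ.rank = k) :
    ∃ (Φt : Matrix (Fin L) (Fin (k + 1)) ℂ) (Ψt : Matrix (Fin R) (Fin (k + 1)) ℂ),
      (∀ l, Φt l (Fin.last k) = 0) ∧
      (∀ r, ∑ j, ‖Ψt r j‖ ^ 2 = 1) ∧
      (∀ l, ∑ j, ‖Φt l j‖ ^ 2 = ∑ m, ‖Φ l m‖ ^ 2) ∧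
      Φt * Ψtᴴ = Φ * Ψᴴ ∧
      ∀ (t lamStar lam' : ℝ),
        Complex.exp (-Complex.I * lamStar * t) •
            (Φt.submatrix id Fin.castSucc * (Ψt.submatrix id Fin.castSucc)ᴴ) +
          Complex.exp (-Complex.I * lam' * t) •
            Matrix.of (fun l r => Φt l (Fin.last k) * (starRingEnd ℂ) (Ψt r (Fin.last k))) =
        Complex.exp (-Complex.I * lamStar * t) • (Φ * Ψᴴ) := by
  classical
  set E := EuclideanSpace ℂ (Fin K)
  -- rows of Φ and Ψ as elements of E
  let φ : Fin L → E := fun l => WithLp.toLp 2 (Φ l)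
  let ψ : Fin R → E := fun r => WithLp.toLp 2 (Ψ r)
  -- the row space
  let S : Submodule ℂ E := Submodule.span ℂ (Set.range φ)
  have hfinrank : Module.finrank ℂ S = k := by
    have := Φ.rank_eq_finrank_span_row
    rw [hrank] at this
    have hmap : S.map (WithLp.linearEquiv 2 ℂ (Fin K → ℂ) : E →ₗ[ℂ] (Fin K → ℂ)) =
        Submodule.span ℂ (Set.range Φ.row) := by
      rw [Submodule.map_span, ← Set.range_comp]; rfl
    rw [← LinearEquiv.finrank_map_eq (WithLp.linearEquiv 2 ℂ (Fin K → ℂ)) S]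
    erw [hmap]
    exact this.symm
  haveI : FiniteDimensional ℂ S := FiniteDimensional.finiteDimensional_submodule S
  let b : OrthonormalBasis (Fin k) ℂ S :=
    (stdOrthonormalBasis ℂ S).reindex (finCongr hfinrank)
  let w : Fin k → E := fun j => (b j : E)
  have hw : Orthonormal ℂ w := by
    have := b.orthonormal.comp_linearIsometry S.subtypeₗᵢ
    exact this
  have hφmem : ∀ l, φ l ∈ S := fun l => Submodule.subset_span ⟨l, rfl⟩
  -- matrices
  let Φt : Matrix (Fin L) (Fin (k + 1)) ℂ :=
    Matrix.of fun l j => Fin.lastCases (motive := fun _ => ℂ) 0 (fun j => inner ℂ (w j) (φ l)) j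
  let srow : Fin R → ℝ := fun r => ∑ j : Fin k, ‖(inner ℂ (w j) (ψ r) : ℂ)‖ ^ 2
  have hs_le : ∀ r, srow r ≤ 1 := by
    intro r
    have h1 : srow r ≤ ‖ψ r‖ ^ 2 := hw.sum_inner_products_le (ψ r)
    have h2 : ‖ψ r‖ ^ 2 = ∑ m, ‖Ψ r m‖ ^ 2 := by
      rw [EuclideanSpace.norm_eq, Real.sq_sqrt (Finset.sum_nonneg fun m _ => sq_nonneg _)]
    exact h1.trans (h2 ▸ hΨrows r)
  let Ψt : Matrix (Fin R) (Fin (k + 1)) ℂ :=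
    Matrix.of fun r j =>
      Fin.lastCases (motive := fun _ => ℂ) ((Real.sqrt (1 - srow r) : ℝ) : ℂ) (fun j => inner ℂ (w j) (ψ r)) j
  have hΦlast : ∀ l, Φt l (Fin.last k) = 0 := fun l => by
    have h0 : Φt l (Fin.last k) = Fin.lastCases (motive := fun _ => ℂ) 0
        (fun j => inner ℂ (w j) (φ l)) (Fin.last k) := rfl
    rw [h0, Fin.lastCases_last]
  -- key product identity
  have hprod : Φt * Ψtᴴ = Φ * Ψᴴ := by
    ext l r
    have hexp : ∑ j : Fin k, (inner ℂ (w j) (φ l) : ℂ) • w j = φ l := by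
      have h := congrArg (Subtype.val) (b.sum_repr' (⟨φ l, hφmem l⟩ : S))
      rw [Submodule.coe_sum] at h
      simpa only [Submodule.coe_smul, Submodule.coe_inner] using h
    have hΦΨ : (Φ * Ψᴴ) l r = (inner ℂ (ψ r) (φ l) : ℂ) := by
      rw [Matrix.mul_apply]
      simp only [Matrix.conjTranspose_apply, PiLp.inner_apply, RCLike.inner_apply]
      exact Finset.sum_congr rfl fun m _ => rfl
    rw [hΦΨ, ← hexp, inner_sum]
    simp only [inner_smul_right]
    rw [Matrix.mul_apply, Fin.sum_univ_castSucc]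
    have e0 : Φt l (Fin.last k) * Ψtᴴ (Fin.last k) r = 0 := by rw [hΦlast]; ring
    rw [e0, add_zero]
    refine Finset.sum_congr rfl fun j _ => ?_
    have e1 : Φt l j.castSucc = (inner ℂ (w j) (φ l) : ℂ) := by
      have h0 : Φt l j.castSucc = Fin.lastCases (motive := fun _ => ℂ) 0
          (fun j => inner ℂ (w j) (φ l)) j.castSucc := rfl
      rw [h0, Fin.lastCases_castSucc]
    have e2 : Ψtᴴ j.castSucc r = (inner ℂ (ψ r) (w j) : ℂ) := by
      have h0 : Ψtᴴ j.castSucc r = (starRingEnd ℂ) (Fin.lastCases (motive := fun _ => ℂ)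
          ((Real.sqrt (1 - srow r) : ℝ) : ℂ) (fun j => inner ℂ (w j) (ψ r)) j.castSucc) := rfl
      rw [h0, Fin.lastCases_castSucc, inner_conj_symm]
    rw [e1, e2]
  refine ⟨Φt, Ψt, hΦlast, ?_, ?_, hprod, ?_⟩
  · intro r
    rw [Fin.sum_univ_castSucc]
    have h0 : (0 : ℝ) ≤ 1 - srow r := by linarith [hs_le r]
    have : ‖Ψt r (Fin.last k)‖ ^ 2 = 1 - srow r := by
      have hlc : Ψt r (Fin.last k) = Fin.lastCases (motive := fun _ => ℂ)
          ((Real.sqrt (1 - srow r) : ℝ) : ℂ) (fun j => inner ℂ (w j) (ψ r)) (Fin.last k) := rfl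
      rw [hlc, Fin.lastCases_last]
      rw [Complex.norm_real, Real.norm_eq_abs, abs_of_nonneg (Real.sqrt_nonneg _),
        Real.sq_sqrt h0]
    rw [this]
    have : ∀ j : Fin k, ‖Ψt r j.castSucc‖ ^ 2 = ‖(inner ℂ (w j) (ψ r) : ℂ)‖ ^ 2 := by
      intro j
      have h0 : Ψt r j.castSucc = Fin.lastCases (motive := fun _ => ℂ)
          ((Real.sqrt (1 - srow r) : ℝ) : ℂ) (fun j => inner ℂ (w j) (ψ r)) j.castSucc := rfl
      rw [h0, Fin.lastCases_castSucc]
    rw [Finset.sum_congr rfl fun j _ => this j]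
    simp [srow]
  · intro l
    rw [Fin.sum_univ_castSucc]
    have hlast : ‖Φt l (Fin.last k)‖ ^ 2 = 0 := by rw [hΦlast]; simp
    rw [hlast, add_zero]
    have hparseval : ∑ j : Fin k, ‖(inner ℂ (w j) (φ l) : ℂ)‖ ^ 2 = ‖φ l‖ ^ 2 := by
      have hx : ‖(⟨φ l, hφmem l⟩ : S)‖ = ‖φ l‖ := rfl
      have h1 : ∀ j, b.repr ⟨φ l, hφmem l⟩ j = (inner ℂ (w j) (φ l) : ℂ) := by
        intro j
        rw [b.repr_apply_apply]
        rfl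
      have h2 := b.repr.norm_map (⟨φ l, hφmem l⟩ : S)
      rw [EuclideanSpace.norm_eq] at h2
      have h3 : ‖φ l‖ ^ 2 = ∑ j, ‖b.repr ⟨φ l, hφmem l⟩ j‖ ^ 2 := by
        rw [← hx, ← h2, Real.sq_sqrt (Finset.sum_nonneg fun j _ => sq_nonneg _)]
      rw [h3]
      exact Finset.sum_congr rfl fun j _ => by rw [h1]
    have h4 : ‖φ l‖ ^ 2 = ∑ m, ‖Φ l m‖ ^ 2 := by
      rw [EuclideanSpace.norm_eq, Real.sq_sqrt (Finset.sum_nonneg fun m _ => sq_nonneg _)]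
    calc ∑ j : Fin k, ‖Φt l j.castSucc‖ ^ 2
        = ∑ j : Fin k, ‖(inner ℂ (w j) (φ l) : ℂ)‖ ^ 2 := by
          refine Finset.sum_congr rfl fun j _ => ?_
          have h0 : Φt l j.castSucc = Fin.lastCases (motive := fun _ => ℂ) 0
              (fun j => inner ℂ (w j) (φ l)) j.castSucc := rfl
          rw [h0, Fin.lastCases_castSucc]
      _ = ∑ m, ‖Φ l m‖ ^ 2 := by rw [hparseval, h4]
  · intro t lamStar lam'
    have hz : Matrix.of (fun l r => Φt l (Fin.last k) * (starRingEnd ℂ) (Ψt r (Fin.last k)))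
        = (0 : Matrix (Fin L) (Fin R) ℂ) := by
      ext l r; simp [hΦlast]
    have hsub : Φt.submatrix id Fin.castSucc * (Ψt.submatrix id Fin.castSucc)ᴴ = Φ * Ψᴴ := by
      rw [← hprod]
      ext l r
      rw [Matrix.mul_apply, Matrix.mul_apply, Fin.sum_univ_castSucc]
      simp [hΦlast]
    rw [hz, hsub, smul_zero, add_zero]
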